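/- arXiv:1502.04041 — 3 statements merged into one kernel-verified Lean document; each statement's English description precedes it below -/
import Mathlib

section
/- Let k ≥ 3 and 2 ≤ ℓ ≤ k-1 be integers such that k-ℓ divides k, let n be divisible by 2k, and let L = n/(k-ℓ). Suppose e_1, ..., e_L are the edges of a Hamilton ℓ-cycle on a vertex set V of size n (indexed cyclically in cycle order), and define blocks B_i = e_i \ e_{i+1} (indices mod L), so |B_i| = k-ℓ. Suppose X ⊆ V and, for every i, the parities of |B_i ∩ X| and |B_{i + k/(k-ℓ)} ∩ X| agree. Then |X| is even. -/
/-- Let `k ≥ 3`, `2 ≤ l ≤ k-1` with `k - l ∣ k`, let `2k ∣ n` and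
`L = n/(k-l)`.  Given the edges `e 0, …, e (L-1)` of a Hamilton `l`-cycle on a vertex set `V`
of size `n` (indexed cyclically), the blocks `B i = e i \ e (i+1)` have size `k - l` and
partition `V`.  If `X ⊆ V` and for every `i` the parities of `|B i ∩ X|` and
`|B (i + k/(k-l)) ∩ X|` agree, then `|X|` is even. -/
theorem stmt_1 {V : Type*} [Fintype V] [DecidableEq V] (k l n L : ℕ)
    (hk : 3 ≤ k) (hl2 : 2 ≤ l) (hlk : l ≤ k - 1) (hdvd : (k - l) ∣ k)
    (hn : Fintype.card V = n) (h2k : 2 * k ∣ n) (hL : L = n / (k - l)) (hLpos : 0 < L)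
    (e : Fin L → Finset V) (B : Fin L → Finset V)
    (hB : ∀ i : Fin L, B i = e i \ e ⟨(i.val + 1) % L, Nat.mod_lt _ hLpos⟩)
    (hBcard : ∀ i : Fin L, (B i).card = k - l)
    (hBdisj : ∀ i j : Fin L, i ≠ j → Disjoint (B i) (B j))
    (hBcover : ∀ x : V, ∃ i : Fin L, x ∈ B i)
    (X : Finset V)
    (hpar : ∀ i : Fin L,
      (B i ∩ X).card % 2 = (B ⟨(i.val + k / (k - l)) % L, Nat.mod_lt _ hLpos⟩ ∩ X).card % 2) :
    Even X.card := by
  set d := k - l with hdd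
  have hd : 0 < d := by omega
  obtain ⟨m, hm⟩ := hdvd
  obtain ⟨s, hs⟩ := h2k
  have hmdiv : k / d = m := by rw [hm, Nat.mul_div_cancel_left _ hd]
  have hn' : n = d * (2 * (m * s)) := by rw [hs, hm]; ring
  have hLval : L = 2 * (m * s) := by rw [hL, hn', Nat.mul_div_cancel_left _ hd]
  have hcomm : s * m = m * s := Nat.mul_comm s m
  -- parity function with values in ZMod 2
  set F : Fin L → ZMod 2 := fun i => ((B i ∩ X).card : ZMod 2) with hF
  have cast2 : ∀ a b : ℕ, a % 2 = b % 2 → (a : ZMod 2) = b := by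
    intro a b h
    rw [← ZMod.natCast_mod a 2, h, ZMod.natCast_mod]
  have hparF : ∀ i : Fin L, F i = F ⟨(i.val + m) % L, Nat.mod_lt _ hLpos⟩ := by
    intro i
    have := hpar i
    rw [hmdiv] at this
    exact cast2 _ _ this
  -- iterate the parity invariance
  have key : ∀ j : ℕ, ∀ i : Fin L, F i = F ⟨(i.val + j * m) % L, Nat.mod_lt _ hLpos⟩ := by
    intro j
    induction j with
    | zero =>
      intro i
      congr 1
      exact Fin.ext (by simp [Nat.mod_eq_of_lt i.isLt])
    | succ j ih =>
      intro i
      rw [ih i, hparF ⟨(i.val + j * m) % L, Nat.mod_lt _ hLpos⟩]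
      congr 1
      apply Fin.ext
      show ((i.val + j * m) % L + m) % L = (i.val + (j + 1) * m) % L
      rw [Nat.mod_add_mod]
      congr 1
      ring
  -- |X| as a sum over blocks
  have hXeq : X = Finset.univ.biUnion (fun i : Fin L => B i ∩ X) := by
    ext x
    simp only [Finset.mem_biUnion, Finset.mem_univ, Finset.mem_inter, true_and]
    constructor
    · intro hx
      obtain ⟨i, hi⟩ := hBcover x
      exact ⟨i, hi, hx⟩
    · rintro ⟨i, _, hx⟩
      exact hx
  have hcard : X.card = ∑ i : Fin L, (B i ∩ X).card := by
    conv_lhs => rw [hXeq]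
    apply Finset.card_biUnion
    intro i _ j _ hij
    exact (hBdisj i j hij).mono Finset.inter_subset_left Finset.inter_subset_left
  -- cast to ZMod 2
  have hcast : (X.card : ZMod 2) = ∑ i : Fin L, F i := by
    rw [hcard]
    push_cast
    rfl
  -- reindex via ℕ
  set G : ℕ → ZMod 2 := fun i => if h : i < L then F ⟨i, h⟩ else 0 with hG
  have hsumG : ∑ i : Fin L, F i = ∑ i ∈ Finset.range L, G i := by
    rw [← Fin.sum_univ_eq_sum_range G L]
    apply Finset.sum_congr rfl
    intro i _
    simp [hG, i.isLt]
  -- second half equals first half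
  have hhalf : ∀ i < m * s, G (m * s + i) = G i := by
    intro i hi
    have h1 : i < L := by omega
    have h2 : m * s + i < L := by omega
    have hkey := key s ⟨i, h1⟩
    have harith : (i + s * m) % L = m * s + i := by
      rw [Nat.mod_eq_of_lt (by omega)]; omega
    simp only [hG]
    rw [dif_pos h2, dif_pos h1, hkey]
    exact (congrArg F (Fin.ext harith)).symm
  -- split the sum
  have hLms : L - m * s = m * s := by omega
  have hsplit : ∑ i ∈ Finset.range L, G i
      = ∑ i ∈ Finset.range (m * s), G i + ∑ i ∈ Finset.range (m * s), G (m * s + i) := by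
    calc ∑ i ∈ Finset.range L, G i
        = ∑ i ∈ Finset.Ico 0 (m * s), G i + ∑ i ∈ Finset.Ico (m * s) L, G i := by
          rw [Finset.range_eq_Ico]
          exact (Finset.sum_Ico_consecutive G (Nat.zero_le _) (by omega)).symm
      _ = ∑ i ∈ Finset.range (m * s), G i + ∑ i ∈ Finset.range (m * s), G (m * s + i) := by
          rw [← Finset.range_eq_Ico, Finset.sum_Ico_eq_sum_range, hLms]
  have hzero : (X.card : ZMod 2) = 0 := by
    rw [hcast, hsumG, hsplit,
      Finset.sum_congr rfl (fun i hi => hhalf i (Finset.mem_range.mp hi))]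
    have h22 : ∀ x : ZMod 2, x + x = 0 := by decide
    exact h22 _
  have := (ZMod.natCast_eq_zero_iff X.card 2).mp hzero
  exact even_iff_two_dvd.mpr this
end

section
/- Let k ≥ 3 and 2 ≤ ℓ ≤ k-1 with k-ℓ dividing k, and let n be divisible by 2k. Let V = X ∪ Y with X, Y disjoint, |X| odd, and let G be any ℓ-uniform hypergraph on V. Define the k-graph H on V whose edges are the k-sets e with either |e ∩ X| even and e inducing a clique in G, or |e ∩ X| odd and e inducing an independent set in G. Then H contains no Hamilton ℓ-cycle. -/
/-- The `i`-th edge of a (potential) `l`-cycle: the interval of `k` consecutive vertices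
starting at position `i * (k - l)` in the cyclic order given by `σ`. -/
def cycleEdge {V : Type*} [DecidableEq V] (k l n L : ℕ) (hn : 0 < n) (σ : Fin n ≃ V)
    (i : Fin L) : Finset V :=
  Finset.image (fun j : Fin k => σ ⟨(i.val * (k - l) + j.val) % n, Nat.mod_lt _ hn⟩)
    Finset.univ

/-- `H` contains a Hamilton `l`-cycle: there is a cyclic ordering of all the vertices and a
cyclic sequence of `L` intervals of `k` consecutive vertices (successive intervals starting
`k - l` apart, the one after the last being the first), each an edge of `H` of size `k`,
each intersecting the subsequent one in exactly `l` vertices, covering every vertex. -/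
def ContainsHamiltonCycle {V : Type*} [Fintype V] [DecidableEq V] (k l : ℕ)
    (H : Finset (Finset V)) : Prop :=
  ∃ (L : ℕ) (hL : 0 < L) (hn : 0 < Fintype.card V) (σ : Fin (Fintype.card V) ≃ V),
    Fintype.card V ∣ L * (k - l) ∧
    (∀ i : Fin L, (cycleEdge k l (Fintype.card V) L hn σ i).card = k) ∧
    (∀ i : Fin L, (cycleEdge k l (Fintype.card V) L hn σ i ∩
      cycleEdge k l (Fintype.card V) L hn σ ⟨(i.val + 1) % L, Nat.mod_lt _ hL⟩).card = l) ∧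
    (∀ x : V, ∃ i : Fin L, x ∈ cycleEdge k l (Fintype.card V) L hn σ i) ∧
    (∀ i : Fin L, cycleEdge k l (Fintype.card V) L hn σ i ∈ H)

/-- Splitting a sum over `range (m * d)` into blocks of length `d`. -/
lemma sum_range_mul_blocks {M : Type*} [AddCommMonoid M] (g : ℕ → M) (m d : ℕ) :
    ∑ j ∈ Finset.range (m * d), g j
      = ∑ t ∈ Finset.range m, ∑ r ∈ Finset.range d, g (t * d + r) := by
  induction m with
  | zero => simp
  | succ m ih =>
    rw [Nat.succ_mul, Finset.sum_range_add, ih, Finset.sum_range_succ]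

/-- Let `k ≥ 3`, `2 ≤ l ≤ k-1` with `k - l ∣ k`, and `2k ∣ n`.  Let
`V = X ∪ Y` with `X, Y` disjoint and `|X|` odd, and let `G` be any `l`-uniform hypergraph
on `V`.  The `k`-graph `H` whose edges are the `k`-sets `e` with either `|e ∩ X|` even and
`e` inducing a clique in `G`, or `|e ∩ X|` odd and `e` inducing an independent set in `G`,
contains no Hamilton `l`-cycle. -/
theorem stmt_2 {V : Type*} [Fintype V] [DecidableEq V] (k l n : ℕ)
    (hk : 3 ≤ k) (hl2 : 2 ≤ l) (hlk : l ≤ k - 1) (hdvd : (k - l) ∣ k)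
    (hn : Fintype.card V = n) (h2k : 2 * k ∣ n)
    (X Y : Finset V) (hXY : Disjoint X Y) (hcover : X ∪ Y = Finset.univ) (hodd : Odd X.card)
    (G : Finset (Finset V)) (hG : ∀ g ∈ G, g.card = l)
    (H : Finset (Finset V))
    (hH : ∀ e : Finset V, e ∈ H ↔ (e.card = k ∧
      ((Even (e ∩ X).card ∧ ∀ g, g ⊆ e → g.card = l → g ∈ G) ∨
       (Odd (e ∩ X).card ∧ ∀ g, g ⊆ e → g.card = l → g ∉ G)))) :
    ¬ ContainsHamiltonCycle k l H := by
  rintro ⟨L, hL, hpos, σ, hdvdL, hcardk, hint, -, hmem⟩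
  set d := k - l with hd
  have hdpos : 0 < d := by omega
  obtain ⟨m, hm⟩ := hdvd
  have hm1 : m ≠ 0 := by rintro rfl; simp at hm; omega
  obtain ⟨s, hs⟩ := h2k
  have hns : Fintype.card V = (2 * s * m) * d := by rw [hn, hs, hm]; ring
  set N := 2 * s * m with hN
  obtain ⟨c, hc⟩ := hdvdL
  -- the indicator of `X` along positions
  set g : ℕ → ℕ :=
    fun p => if σ ⟨p % Fintype.card V, Nat.mod_lt _ hpos⟩ ∈ X then 1 else 0 with hgdef
  have gcong : ∀ p q : ℕ, p % Fintype.card V = q % Fintype.card V → g p = g q := by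
    intro p q h
    have h2 : (⟨p % Fintype.card V, Nat.mod_lt _ hpos⟩ : Fin (Fintype.card V))
        = ⟨q % Fintype.card V, Nat.mod_lt _ hpos⟩ := Fin.ext h
    simp only [hgdef]
    rw [h2]
  -- block counts
  set f : ℕ → ℕ := fun t => ∑ r ∈ Finset.range d, g (t * d + r) with hfdef
  have hfL : ∀ t q : ℕ, f (t + q * L) = f t := by
    intro t q
    apply Finset.sum_congr rfl
    intro r _
    apply gcong
    have h1 : (t + q * L) * d + r = (t * d + r) + (q * c) * Fintype.card V := by
      have h2 : (t + q * L) * d + r = t * d + r + q * (L * d) := by ring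
      rw [h2, hc]; ring
    rw [h1, Nat.add_mul_mod_self_right]
  -- edge counts in terms of block counts
  have hedge : ∀ i : Fin L,
      (cycleEdge k l (Fintype.card V) L hpos σ i ∩ X).card
        = ∑ t ∈ Finset.range m, f (i.val + t) := by
    intro i
    set u : Fin k → V :=
      fun j => σ ⟨(i.val * d + j.val) % Fintype.card V, Nat.mod_lt _ hpos⟩ with hu
    have hcu : (Finset.image u Finset.univ).card = k := hcardk i
    have hinj : Function.Injective u := by
      have h2 : Set.InjOn u ↑(Finset.univ : Finset (Fin k)) :=
        Finset.card_image_iff.1 (by rw [hcu, Finset.card_univ, Fintype.card_fin])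
      exact fun a b hab => h2 (by simp) (by simp) hab
    have him : cycleEdge k l (Fintype.card V) L hpos σ i ∩ X
        = Finset.image u (Finset.univ.filter fun j => u j ∈ X) := by
      rw [show cycleEdge k l (Fintype.card V) L hpos σ i
        = Finset.image u Finset.univ from rfl]
      ext x
      simp only [Finset.mem_inter, Finset.mem_image, Finset.mem_filter, Finset.mem_univ,
        true_and]
      constructor
      · rintro ⟨⟨j, rfl⟩, hx⟩; exact ⟨j, hx, rfl⟩
      · rintro ⟨j, hj, rfl⟩; exact ⟨⟨j, rfl⟩, hj⟩
    rw [him, Finset.card_image_of_injective _ hinj, Finset.card_filter]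
    have h3 : ∀ j : Fin k, (if u j ∈ X then 1 else 0) = g (i.val * d + j.val) := by
      intro j; rfl
    rw [Finset.sum_congr rfl (fun j _ => h3 j)]
    rw [Fin.sum_univ_eq_sum_range (fun p => g (i.val * d + p)) k]
    rw [show Finset.range k = Finset.range (m * d) by rw [hm, Nat.mul_comm]]
    rw [sum_range_mul_blocks (fun p => g (i.val * d + p)) m d]
    apply Finset.sum_congr rfl
    intro t _
    apply Finset.sum_congr rfl
    intro r _
    congr 1
    ring
  -- consecutive edges have the same parity of intersection with X
  have hpar : ∀ i : Fin L,
      (cycleEdge k l (Fintype.card V) L hpos σ i ∩ X).card % 2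
        = (cycleEdge k l (Fintype.card V) L hpos σ ⟨(i.val + 1) % L, Nat.mod_lt _ hL⟩
            ∩ X).card % 2 := by
    intro i
    set A := cycleEdge k l (Fintype.card V) L hpos σ i with hA'
    set B := cycleEdge k l (Fintype.card V) L hpos σ ⟨(i.val + 1) % L, Nat.mod_lt _ hL⟩
      with hB'
    have hA := ((hH A).1 (hmem i)).2
    have hB := ((hH B).1 (hmem ⟨(i.val + 1) % L, Nat.mod_lt _ hL⟩)).2
    have hiAB : (A ∩ B).card = l := hint i
    have hsub1 : A ∩ B ⊆ A := Finset.inter_subset_left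
    have hsub2 : A ∩ B ⊆ B := Finset.inter_subset_right
    rcases hA with ⟨hAe, hAc⟩ | ⟨hAo, hAi⟩ <;> rcases hB with ⟨hBe, hBc⟩ | ⟨hBo, hBi⟩
    · rw [Nat.even_iff] at hAe hBe; omega
    · exact absurd (hAc _ hsub1 hiAB) (hBi _ hsub2 hiAB)
    · exact absurd (hBc _ hsub2 hiAB) (hAi _ hsub1 hiAB)
    · rw [Nat.odd_iff] at hAo hBo; omega
  -- the key parity-periodicity of f
  have hPf : ∀ i : ℕ, f (i + m) % 2 = f i % 2 := by
    intro i
    obtain ⟨m', hm'⟩ : ∃ m', m = m' + 1 := ⟨m - 1, by omega⟩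
    set i0 := i % L with hi0
    have hiq := Nat.div_add_mod' i L
    have hi0L : i0 < L := Nat.mod_lt _ hL
    have e1 : f i = f i0 := by
      rw [show i = i0 + (i / L) * L by omega, hfL]
    have e2 : f (i + m) = f (i0 + m) := by
      rw [show i + m = (i0 + m) + (i / L) * L by omega, hfL]
    rw [e1, e2]
    have h3 := hpar ⟨i0, hi0L⟩
    rw [hedge ⟨i0, hi0L⟩,
      hedge ⟨((⟨i0, hi0L⟩ : Fin L).val + 1) % L, Nat.mod_lt _ hL⟩] at h3
    simp only [Fin.val_mk] at h3
    have h4 : ∀ t : ℕ, f ((i0 + 1) % L + t) = f (i0 + 1 + t) := by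
      intro t
      have hq := Nat.div_add_mod' (i0 + 1) L
      rw [show i0 + 1 + t = ((i0 + 1) % L + t) + ((i0 + 1) / L) * L by omega, hfL]
    rw [Finset.sum_congr rfl (fun t _ => h4 t)] at h3
    rw [hm'] at h3
    rw [Finset.sum_range_succ' (fun t => f (i0 + t)) m'] at h3
    rw [Finset.sum_range_succ (fun t => f (i0 + 1 + t)) m'] at h3
    have h6 : ∑ t ∈ Finset.range m', f (i0 + (t + 1))
        = ∑ t ∈ Finset.range m', f (i0 + 1 + t) :=
      Finset.sum_congr rfl (fun t _ => by rw [show i0 + (t + 1) = i0 + 1 + t by omega])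
    rw [h6] at h3
    rw [show i0 + 1 + m' = i0 + m by omega] at h3
    simp only [Nat.add_zero] at h3
    omega
  have hstep : ∀ q r : ℕ, f (q * m + r) % 2 = f r % 2 := by
    intro q r
    induction q with
    | zero => simp
    | succ q ih =>
      rw [show (q + 1) * m + r = (q * m + r) + m by ring, hPf]
      exact ih
  -- total block sum equals |X|
  have hsum : ∑ t ∈ Finset.range N, f t = X.card := by
    rw [show (∑ t ∈ Finset.range N, f t)
        = ∑ j ∈ Finset.range (N * d), g j from (sum_range_mul_blocks g N d).symm]
    rw [← hns]
    rw [← Fin.sum_univ_eq_sum_range g (Fintype.card V)]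
    have h1 : ∀ j : Fin (Fintype.card V), g j.val = if σ j ∈ X then 1 else 0 := by
      intro j
      have hj : (⟨j.val % Fintype.card V, Nat.mod_lt _ hpos⟩ : Fin (Fintype.card V)) = j :=
        Fin.ext (Nat.mod_eq_of_lt j.isLt)
      simp only [hgdef]
      rw [hj]
    rw [Finset.sum_congr rfl (fun j _ => h1 j), ← Finset.card_filter]
    apply Finset.card_bij (fun j _ => σ j)
    · intro j hj; exact (Finset.mem_filter.1 hj).2
    · intro a ha b hb hab; exact σ.injective hab
    · intro x hx
      exact ⟨σ.symm x, Finset.mem_filter.2 ⟨Finset.mem_univ _, by simp [hx]⟩, by simp⟩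
  -- conclude: |X| is even, contradiction
  have hz : ((X.card : ℕ) : ZMod 2) = 0 := by
    rw [← hsum, show N = 2 * s * m from rfl, sum_range_mul_blocks f (2 * s) m]
    push_cast
    have h1 : ∀ q ∈ Finset.range (2 * s),
        (∑ r ∈ Finset.range m, ((f (q * m + r) : ℕ) : ZMod 2))
          = ∑ r ∈ Finset.range m, ((f r : ℕ) : ZMod 2) := by
      intro q _
      exact Finset.sum_congr rfl fun r _ =>
        (ZMod.natCast_eq_natCast_iff _ _ _).2 (hstep q r)
    rw [Finset.sum_congr rfl h1, Finset.sum_const, Finset.card_range, nsmul_eq_mul]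
    have h2 : ((2 * s : ℕ) : ZMod 2) = 0 := by
      rw [Nat.cast_mul]
      rw [show ((2 : ℕ) : ZMod 2) = 0 from by decide, zero_mul]
    rw [h2, zero_mul]
  have hz1 : ((X.card : ℕ) : ZMod 2) = 1 := by
    have h1 : X.card % 2 = 1 % 2 := by
      have := Nat.odd_iff.1 hodd; omega
    have h2 := (ZMod.natCast_eq_natCast_iff X.card 1 2).2 h1
    simpa using h2
  rw [hz] at hz1
  exact one_ne_zero hz1.symm
end

section
/- Let k ≥ 2, 0 < p < 1, and 0 < ε < p/(2k·k!). Let H be a k-uniform hypergraph on n vertices which is (p,μ)-dense with μ = (p/2)·ε^{2k}, and let X ⊆ V(H) with |X| ≥ ε²n. Then the induced subgraph H[X] contains a loose path of length at least ε³n, provided n is sufficiently large. -/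
/-- `tupleCount H X` is `e(X 0, …, X (k-1))`: the number of `k`-tuples
`(x 0, …, x (k-1)) ∈ X 0 × ⋯ × X (k-1)` with `{x 0, …, x (k-1)}` an edge of `H`. -/
def tupleCount {V : Type*} [DecidableEq V] {k : ℕ} (H : Finset (Finset V))
    (X : Fin k → Finset V) : ℕ :=
  ((Fintype.piFinset X).filter (fun x => Finset.image x Finset.univ ∈ H)).card

/-- `H` is `(p, μ)`-dense: for all `X 0, …, X (k-1) ⊆ V(H)`,
`e(X 0, …, X (k-1)) ≥ p * |X 0| ⋯ |X (k-1)| - μ * n ^ k`. -/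
def IsDense {V : Type*} [Fintype V] [DecidableEq V] (k : ℕ) (H : Finset (Finset V))
    (p μ : ℝ) : Prop :=
  ∀ X : Fin k → Finset V,
    p * ∏ i, ((X i).card : ℝ) - μ * (Fintype.card V : ℝ) ^ k ≤ (tupleCount H X : ℝ)

/-- `IsLoosePath k H W u v m`: `H` contains a loose path of length `m` with vertex set `W`
and endvertex pair `(u, v)`. -/
def IsLoosePath {V : Type*} [DecidableEq V] (k : ℕ) (H : Finset (Finset V))
    (W : Finset V) (u v : V) (m : ℕ) : Prop :=
  ∃ w : ℕ → V,
    ((Finset.range (m * (k - 1) + 1)).image w).card = m * (k - 1) + 1 ∧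
    (Finset.range (m * (k - 1) + 1)).image w = W ∧
    w 0 = u ∧ w (m * (k - 1)) = v ∧
    ∀ i < m, (Finset.range k).image (fun j => w (i * (k - 1) + j)) ∈ H

namespace Stmt5Aux

open Finset

variable {V : Type*} [DecidableEq V]


variable {V : Type*} [DecidableEq V]

lemma image_range_add (g : ℕ → V) (a b : ℕ) :
    (range (a+b)).image g = (range a).image g ∪ (range b).image (fun t => g (a+t)) := by
  ext x
  simp only [mem_union, mem_image, mem_range]
  constructor
  · rintro ⟨j, hj, rfl⟩
    rcases lt_or_ge j a with h | h
    · exact Or.inl ⟨j, h, rfl⟩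
    · exact Or.inr ⟨j - a, by omega, by congr 1; omega⟩
  · rintro (⟨j, hj, rfl⟩ | ⟨t, ht, rfl⟩)
    · exact ⟨j, by omega, rfl⟩
    · exact ⟨a + t, by omega, rfl⟩

lemma exists_listing (e : Finset V) {c : ℕ} (hc : e.card = c) (hpos : 0 < c) :
    ∃ a : ℕ → V, (range c).image a = e ∧ ((range c).image a).card = c := by
  have hpos' : 0 < e.card := by omega
  refine ⟨fun i => (e.equivFin.symm ⟨i % e.card, Nat.mod_lt _ hpos'⟩ : e), ?_, ?_⟩
  · apply Finset.eq_of_subset_of_card_le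
    · intro x hx
      simp only [mem_image, mem_range] at hx
      obtain ⟨i, _, rfl⟩ := hx
      exact (e.equivFin.symm _).2
    · rw [Finset.card_image_of_injOn]
      · rw [Finset.card_range]; omega
      · intro i hi j hj hij
        simp only [mem_coe, mem_range] at hi hj
        have := e.equivFin.symm.injective (Subtype.ext hij)
        have : i % e.card = j % e.card := by
          simpa using congrArg Fin.val this
        rw [Nat.mod_eq_of_lt (by omega), Nat.mod_eq_of_lt (by omega)] at this
        exact this
  · rw [Finset.card_image_of_injOn]
    · exact (Finset.card_range c)

    · intro i hi j hj hij
      simp only [mem_coe, mem_range] at hi hj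
      have := e.equivFin.symm.injective (Subtype.ext hij)
      have : i % e.card = j % e.card := by simpa using congrArg Fin.val this
      rw [Nat.mod_eq_of_lt (by omega), Nat.mod_eq_of_lt (by omega)] at this
      exact this



lemma exists_mindeg (H : Finset (Finset V)) (D : ℕ) (S : Finset V)
    (h : S.card * D < (H.filter (fun e => e ⊆ S)).card) :
    ∃ T ⊆ S, 0 < (H.filter (fun e => e ⊆ T)).card ∧
      ∀ v ∈ T, D < (H.filter (fun e => e ⊆ T ∧ v ∈ e)).card := by
  induction S using Finset.strongInductionOn with
  | _ S ih =>
    by_cases hbad : ∃ v ∈ S, (H.filter (fun e => e ⊆ S ∧ v ∈ e)).card ≤ D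
    · obtain ⟨v, hvS, hdeg⟩ := hbad
      have hsplit := Finset.card_filter_add_card_filter_not
        (s := H.filter (fun e => e ⊆ S)) (p := fun e => v ∈ e)
      rw [Finset.filter_filter, Finset.filter_filter] at hsplit
      have heq : (H.filter (fun a => a ⊆ S ∧ ¬ v ∈ a)) = H.filter (fun e => e ⊆ S.erase v) := by
        apply Finset.filter_congr
        intro e _
        simp only [Finset.subset_erase]
      rw [heq] at hsplit
      have hcard : (S.erase v).card = S.card - 1 := Finset.card_erase_of_mem hvS
      have h1 : 1 ≤ S.card := Finset.card_pos.2 ⟨v, hvS⟩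
      have hkey : (S.erase v).card * D < (H.filter (fun e => e ⊆ S.erase v)).card := by
        rw [hcard]
        have e1 : (S.card - 1) * D + D = S.card * D := by
          have h2 : (S.card - 1) + 1 = S.card := by omega
          calc (S.card - 1) * D + D = ((S.card - 1) + 1) * D := by ring
          _ = S.card * D := by rw [h2]
        omega
      obtain ⟨T, hTsub, hT⟩ := ih (S.erase v) (Finset.erase_ssubset hvS) hkey
      exact ⟨T, hTsub.trans (Finset.erase_subset _ _), hT⟩
    · push_neg at hbad
      exact ⟨S, Finset.Subset.refl _, by omega, hbad⟩



lemma pair_bound (k : ℕ) (hk : 2 ≤ k) (H : Finset (Finset V))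
    (hH : ∀ e ∈ H, e.card = k) (T : Finset V) (u v : V) (huv : u ≠ v) :
    (H.filter (fun e => e ⊆ T ∧ u ∈ e ∧ v ∈ e)).card ≤ T.card ^ (k - 2) := by
  have h1 : (H.filter (fun e => e ⊆ T ∧ u ∈ e ∧ v ∈ e)).card ≤
      (T.powersetCard (k - 2)).card := by
    apply Finset.card_le_card_of_injOn (fun e => (e.erase u).erase v)
    · intro e he
      simp only [Finset.mem_coe, Finset.mem_filter] at he ⊢
      obtain ⟨heH, heT, heu, hev⟩ := he
      rw [Finset.mem_powersetCard]
      constructor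
      · exact ((e.erase u).erase_subset _).trans ((e.erase_subset _).trans heT)
      · rw [Finset.card_erase_of_mem (Finset.mem_erase.2 ⟨(Ne.symm huv), hev⟩),
          Finset.card_erase_of_mem heu, hH e heH]
        omega
    · intro e he f hf hef
      simp only [coe_filter, Set.mem_setOf_eq] at he hf
      have key : ∀ g : Finset V, g ∈ H → u ∈ g → v ∈ g →
          insert u (insert v ((g.erase u).erase v)) = g := by
        intro g hg hu hv
        rw [Finset.insert_erase (Finset.mem_erase.2 ⟨Ne.symm huv, hv⟩) ,
          Finset.insert_erase hu]
      have hef' : (e.erase u).erase v = (f.erase u).erase v := hef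
      calc e = insert u (insert v ((e.erase u).erase v)) := (key e he.1 he.2.2.1 he.2.2.2).symm
      _ = insert u (insert v ((f.erase u).erase v)) := by rw [hef']
      _ = f := key f hf.1 hf.2.2.1 hf.2.2.2
  rw [Finset.card_powersetCard] at h1
  exact h1.trans (Nat.choose_le_pow _ _)

lemma tupleCount_le (k : ℕ) (hk : 2 ≤ k) (H : Finset (Finset V))
    (hH : ∀ e ∈ H, e.card = k) (X' : Finset V) :
    tupleCount H (fun _ : Fin k => X') ≤ (Nat.factorial k) * (H.filter (fun e => e ⊆ X')).card := by
  classical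
  set S := ((Fintype.piFinset fun _ : Fin k => X').filter
    (fun x => Finset.image x Finset.univ ∈ H)) with hS
  have hmaps : ∀ x ∈ S, Finset.image x Finset.univ ∈ H.filter (fun e => e ⊆ X') := by
    intro x hx
    simp only [hS, Finset.mem_filter, Fintype.mem_piFinset] at hx
    rw [Finset.mem_filter]
    refine ⟨hx.2, ?_⟩
    intro a ha
    simp only [Finset.mem_image, Finset.mem_univ, true_and] at ha
    obtain ⟨i, rfl⟩ := ha
    exact hx.1 i
  have hfiber : ∀ e ∈ H.filter (fun e => e ⊆ X'),
      (S.filter (fun x => Finset.image x Finset.univ = e)).card ≤ Nat.factorial k := by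
    intro e he
    have hek : e.card = k := hH e (Finset.mem_filter.1 he).1
    -- map into embeddings Fin k ↪ Fin k
    have hcardEmb : Fintype.card (Fin k ↪ Fin k) = Nat.factorial k := by
      rw [Fintype.card_embedding_eq, Fintype.card_fin, Nat.descFactorial_self]
    set G : (Fin k → V) → (Fin k → Fin k) := fun x i =>
      if hm : x i ∈ e then finCongr hek (e.equivFin ⟨x i, hm⟩) else ⟨0, by omega⟩ with hG
    have hGmem : ∀ (x : Fin k → V) (hx : ∀ i, x i ∈ e) (i : Fin k),
        G x i = finCongr hek (e.equivFin ⟨x i, hx i⟩) := by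
      intro x hx i
      simp only [hG, dif_pos (hx i)]
    have hinjx : ∀ x ∈ S.filter (fun x => Finset.image x Finset.univ = e),
        Function.Injective x ∧ (∀ i, x i ∈ e) := by
      intro x hx
      rw [Finset.mem_filter] at hx
      have himg : Finset.image x Finset.univ = e := hx.2
      have hmem : ∀ i, x i ∈ e := by
        intro i
        rw [← himg]
        exact Finset.mem_image_of_mem x (Finset.mem_univ i)
      have hcardim : (Finset.image x Finset.univ).card = (Finset.univ : Finset (Fin k)).card := by
        rw [himg, hek, Finset.card_univ, Fintype.card_fin]
      have := Finset.card_image_iff.1 hcardim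
      refine ⟨fun i j hij => ?_, hmem⟩
      exact this (Finset.mem_coe.2 (Finset.mem_univ i)) (Finset.mem_coe.2 (Finset.mem_univ j)) hij
    have hGinj : ∀ x ∈ S.filter (fun x => Finset.image x Finset.univ = e),
        Function.Injective (G x) := by
      intro x hx
      obtain ⟨hxinj, hxmem⟩ := hinjx x hx
      intro i j hij
      rw [hGmem x hxmem i, hGmem x hxmem j] at hij
      have := e.equivFin.injective (by
        apply (finCongr hek).injective
        exact hij)
      exact hxinj (congrArg Subtype.val this)
    set F : (Fin k → V) → (Fin k ↪ Fin k) := fun x =>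
      if h : Function.Injective (G x) then ⟨G x, h⟩ else Function.Embedding.refl _ with hF
    apply le_of_le_of_eq (Finset.card_le_card_of_injOn F
      (fun x _ => Finset.mem_univ (F x)) ?_)
    · rw [Finset.card_univ, hcardEmb]
    · intro x hx y hy hxy
      have hGx := hGinj x hx
      have hGy := hGinj y hy
      rw [hF] at hxy
      simp only [dif_pos hGx, dif_pos hGy] at hxy
      have hGeq : G x = G y := congrArg (fun (f : Fin k ↪ Fin k) => (f : Fin k → Fin k)) hxy
      obtain ⟨hxinj, hxmem⟩ := hinjx x hx
      obtain ⟨hyinj, hymem⟩ := hinjx y hy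
      funext i
      have h1 := hGmem x hxmem i
      have h2 := hGmem y hymem i
      have : finCongr hek (e.equivFin ⟨x i, hxmem i⟩) = finCongr hek (e.equivFin ⟨y i, hymem i⟩) := by
        rw [← h1, ← h2, hGeq]
      have := e.equivFin.injective ((finCongr hek).injective this)
      exact congrArg Subtype.val this
  calc S.card = ∑ e ∈ H.filter (fun e => e ⊆ X'),
        (S.filter (fun x => Finset.image x Finset.univ = e)).card :=
        Finset.card_eq_sum_card_fiberwise hmaps
  _ ≤ ∑ _e ∈ H.filter (fun e => e ⊆ X'), Nat.factorial k := Finset.sum_le_sum hfiber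
  _ = (H.filter (fun e => e ⊆ X')).card * Nat.factorial k := by
        rw [Finset.sum_const, smul_eq_mul]
  _ = Nat.factorial k * (H.filter (fun e => e ⊆ X')).card := mul_comm _ _

lemma extend_path (k : ℕ) (hk : 2 ≤ k) (H : Finset (Finset V)) (W : Finset V) (u v : V) (m : ℕ)
    (hp : IsLoosePath k H W u v m) (e : Finset V) (heH : e ∈ H) (hek : e.card = k)
    (heW : e ∩ W = {v}) : ∃ v', IsLoosePath k H (W ∪ e) u v' (m + 1) := by
  obtain ⟨w, hcard, himg, hw0, hwend, hedges⟩ := hp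
  have hvW : v ∈ W := by
    rw [← himg]
    exact Finset.mem_image.2 ⟨m * (k - 1), Finset.mem_range.2 (by omega), hwend⟩
  have hve : v ∈ e := by
    have hv : v ∈ e ∩ W := by rw [heW]; exact Finset.mem_singleton_self v
    exact (Finset.mem_inter.1 hv).1
  set L := m * (k - 1) with hL
  have hsucc : (m + 1) * (k - 1) = L + (k - 1) := by rw [hL]; ring
  set f := e.erase v with hf
  have hfcard : f.card = k - 1 := by rw [hf, Finset.card_erase_of_mem hve, hek]
  have hk1 : 0 < k - 1 := by omega
  obtain ⟨a, haimg, hacard⟩ := exists_listing f hfcard hk1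
  set w' : ℕ → V := fun j => if j ≤ L then w j else a (j - (L+1)) with hw'
  have hWcard : W.card = L + 1 := by rw [← himg]; exact hcard
  have hdisj : Disjoint W f := by
    rw [Finset.disjoint_right]
    intro x hxf hxW
    rw [hf, Finset.mem_erase] at hxf
    have : x ∈ e ∩ W := Finset.mem_inter.2 ⟨hxf.2, hxW⟩
    rw [heW, Finset.mem_singleton] at this
    exact hxf.1 this
  have hWuf : W ∪ f = W ∪ e := by
    ext x
    simp only [Finset.mem_union, hf, Finset.mem_erase]
    constructor
    · rintro (h | h)
      · exact Or.inl h
      · exact Or.inr h.2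
    · rintro (h | h)
      · exact Or.inl h
      · by_cases hxv : x = v
        · exact Or.inl (hxv ▸ hvW)
        · exact Or.inr ⟨hxv, h⟩
  have himg' : (range ((m+1) * (k-1) + 1)).image w' = W ∪ f := by
    have harith : (m+1) * (k-1) + 1 = (L+1) + (k-1) := by omega
    rw [harith, image_range_add]
    have h1 : (range (L+1)).image w' = W := by
      rw [← himg]
      apply Finset.image_congr
      intro j hj
      rw [Finset.mem_coe, Finset.mem_range] at hj
      simp only [hw']
      rw [if_pos (by omega)]
    have h2 : (range (k-1)).image (fun t => w' ((L+1)+t)) = f := by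
      rw [← haimg]
      apply Finset.image_congr
      intro t ht
      simp only [hw']
      rw [if_neg (by omega)]
      congr 1
      omega
    rw [h1, h2]
  refine ⟨a (k - 2), w', ?_, ?_, ?_, ?_, ?_⟩
  · rw [himg', Finset.card_union_of_disjoint hdisj, hWcard, hfcard]
    omega
  · rw [himg', hWuf]
  · simp only [hw']
    rw [if_pos (by omega)]
    exact hw0
  · simp only [hw']
    rw [hsucc, if_neg (by omega)]
    congr 1
    omega
  · intro i hi
    rcases Nat.lt_or_ge i m with him | him
    · have hmul : (i + 1) * (k - 1) ≤ m * (k - 1) := Nat.mul_le_mul_right _ (by omega)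
      have hmul2 : (i + 1) * (k - 1) = i * (k - 1) + (k - 1) := by ring
      have hcongr : (range k).image (fun j => w' (i * (k-1) + j)) =
          (range k).image (fun j => w (i * (k-1) + j)) := by
        apply Finset.image_congr
        intro j hj
        rw [Finset.mem_coe, Finset.mem_range] at hj
        simp only [hw']
        rw [if_pos (by omega)]
      rw [hcongr]
      exact hedges i him
    · have him' : i = m := by omega
      subst him'
      have hkey : (range k).image (fun j => w' (i * (k-1) + j)) = insert v f := by
        ext x
        simp only [Finset.mem_image, Finset.mem_range, Finset.mem_insert]
        constructor
        · rintro ⟨j, hj, rfl⟩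
          by_cases hj0 : j = 0
          · subst hj0
            left
            simp only [hw']
            rw [if_pos (by omega)]
            rw [← hL]
            simpa using hwend
          · right
            rw [← haimg]
            have : w' (i * (k-1) + j) = a (j - 1) := by
              simp only [hw']
              rw [if_neg (by omega)]
              congr 1
              omega
            rw [this]
            exact Finset.mem_image.2 ⟨j - 1, Finset.mem_range.2 (by omega), rfl⟩
        · rintro (rfl | hx)
          · refine ⟨0, by omega, ?_⟩
            simp only [hw']
            rw [if_pos (by omega)]
            simpa using hwend
          · rw [← haimg] at hx
            obtain ⟨t, ht, rfl⟩ := Finset.mem_image.1 hx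
            rw [Finset.mem_range] at ht
            refine ⟨t + 1, by omega, ?_⟩
            simp only [hw']
            rw [if_neg (by omega)]
            congr 1
            omega
      rw [hkey, hf, Finset.insert_erase hve]
      exact heH

lemma greedy_path (k : ℕ) (hk : 2 ≤ k) (H : Finset (Finset V)) (hH : ∀ e ∈ H, e.card = k)
    (T : Finset V) (M Cb : ℕ)
    (hCb : ∀ x y : V, x ≠ y → (H.filter (fun e => e ⊆ T ∧ x ∈ e ∧ y ∈ e)).card ≤ Cb)
    (hdeg : ∀ v ∈ T, M * (k-1) * Cb < (H.filter (fun e => e ⊆ T ∧ v ∈ e)).card)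
    (hne : 0 < (H.filter (fun e => e ⊆ T)).card) :
    ∃ W u v, W ⊆ T ∧ IsLoosePath k H W u v M := by
  obtain ⟨e₀, he₀⟩ := Finset.card_pos.1 hne
  rw [Finset.mem_filter] at he₀
  have he₀k : e₀.card = k := hH e₀ he₀.1
  obtain ⟨t₀, ht₀⟩ := Finset.card_pos.1 (show 0 < e₀.card by omega)
  have ht₀T : t₀ ∈ T := he₀.2 ht₀
  have claim : ∀ m, m ≤ M → ∃ W u v, W ⊆ T ∧ IsLoosePath k H W u v m := by
    intro m
    induction m with
    | zero =>
      intro _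
      refine ⟨{t₀}, t₀, t₀, by simpa using ht₀T, fun _ => t₀, ?_, ?_, rfl, rfl, ?_⟩
      · simp
      · simp
      · intro i hi; omega
    | succ m ih =>
      intro hm
      obtain ⟨W, u, v, hWT, hp⟩ := ih (by omega)
      obtain ⟨w, hcard, himg, hw0, hwend, hedges⟩ := hp
      have hvW : v ∈ W := by
        rw [← himg]
        exact Finset.mem_image.2 ⟨m * (k - 1), Finset.mem_range.2 (by omega), hwend⟩
      have hWcard : W.card = m * (k-1) + 1 := by rw [← himg]; exact hcard
      have hvT : v ∈ T := hWT hvW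
      have hA : M * (k-1) * Cb < (H.filter (fun e => e ⊆ T ∧ v ∈ e)).card := hdeg v hvT
      set A := H.filter (fun e => e ⊆ T ∧ v ∈ e) with hAdef
      set Bad := A.filter (fun e => ¬ (e ∩ W ⊆ {v})) with hBaddef
      have hBadsub : Bad ⊆ (W.erase v).biUnion
          (fun x => H.filter (fun e => e ⊆ T ∧ v ∈ e ∧ x ∈ e)) := by
        intro e he
        rw [hBaddef, Finset.mem_filter] at he
        obtain ⟨heA, hnsub⟩ := he
        obtain ⟨x, hxmem, hxv⟩ := Finset.not_subset.1 hnsub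
        rw [Finset.mem_inter] at hxmem
        rw [Finset.mem_singleton] at hxv
        rw [hAdef, Finset.mem_filter] at heA
        rw [Finset.mem_biUnion]
        exact ⟨x, Finset.mem_erase.2 ⟨hxv, hxmem.2⟩,
          Finset.mem_filter.2 ⟨heA.1, heA.2.1, heA.2.2, hxmem.1⟩⟩
      have hBadcard : Bad.card ≤ (m * (k-1)) * Cb := by
        calc Bad.card ≤ ((W.erase v).biUnion
            (fun x => H.filter (fun e => e ⊆ T ∧ v ∈ e ∧ x ∈ e))).card :=
              Finset.card_le_card hBadsub
        _ ≤ ∑ x ∈ W.erase v, (H.filter (fun e => e ⊆ T ∧ v ∈ e ∧ x ∈ e)).card :=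
              Finset.card_biUnion_le
        _ ≤ ∑ _x ∈ W.erase v, Cb := by
              apply Finset.sum_le_sum
              intro x hx
              exact hCb v x (Ne.symm (Finset.mem_erase.1 hx).1)
        _ = (W.erase v).card * Cb := by rw [Finset.sum_const, smul_eq_mul]
        _ = (m * (k-1)) * Cb := by rw [Finset.card_erase_of_mem hvW, hWcard]; simp
      have hlt : Bad.card < A.card := by
        apply lt_of_le_of_lt (hBadcard.trans (Nat.mul_le_mul_right Cb
          (Nat.mul_le_mul_right (k-1) (by omega : m ≤ M))))
        exact hA
      have hnsub : ¬ (A ⊆ Bad) := fun hsub => absurd (Finset.card_le_card hsub) (not_le.2 hlt)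
      obtain ⟨e, heA, heBad⟩ := Finset.not_subset.1 hnsub
      have hsub : e ∩ W ⊆ {v} := by
        by_contra hn
        exact heBad (Finset.mem_filter.2 ⟨heA, hn⟩)
      rw [hAdef, Finset.mem_filter] at heA
      have heW : e ∩ W = {v} := by
        apply Finset.Subset.antisymm hsub
        rw [Finset.singleton_subset_iff, Finset.mem_inter]
        exact ⟨heA.2.2, hvW⟩
      obtain ⟨v', hp'⟩ := extend_path k hk H W u v m ⟨w, hcard, himg, hw0, hwend, hedges⟩
        e heA.1 (hH e heA.1) heW
      exact ⟨W ∪ e, u, v', Finset.union_subset hWT heA.2.1, hp'⟩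
  exact claim M le_rfl


end Stmt5Aux

set_option maxHeartbeats 2000000 in
open Stmt5Aux in
/-- Let `k ≥ 2`, `0 < p < 1` and `0 < ε < p / (2k·k!)`.  If `H` is a
`(p, μ)`-dense `k`-graph on `n` vertices with `μ = (p/2)·ε^(2k)`, `n` sufficiently large,
and `X ⊆ V(H)` has `|X| ≥ ε² n`, then `H[X]` contains a loose path of length at least
`ε³ n`. -/
theorem stmt_5 (k : ℕ) (hk : 2 ≤ k) (p ε : ℝ) (hp : 0 < p) (hp1 : p < 1)
    (hε : 0 < ε) (hεu : ε < p / (2 * k * (Nat.factorial k))) :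
    ∃ n₀ : ℕ, ∀ (V : Type) (_ : Fintype V) (_ : DecidableEq V) (H : Finset (Finset V)),
      n₀ ≤ Fintype.card V →
      (∀ e ∈ H, e.card = k) →
      IsDense k H p ((p / 2) * ε ^ (2 * k)) →
      ∀ X : Finset V, ε ^ 2 * (Fintype.card V : ℝ) ≤ (X.card : ℝ) →
        ∃ (W : Finset V) (u v : V) (m : ℕ),
          W ⊆ X ∧ IsLoosePath k H W u v m ∧ ε ^ 3 * (Fintype.card V : ℝ) ≤ (m : ℝ) := by
  classical
  set K : ℝ := (Nat.factorial k : ℝ) with hKdef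
  have hKpos : (0:ℝ) < K := by rw [hKdef]; exact_mod_cast Nat.factorial_pos k
  have hkR : (2:ℝ) ≤ (k:ℝ) := by exact_mod_cast hk
  have hkpos : (0:ℝ) < (k:ℝ) := by linarith
  refine ⟨Nat.ceil ((2*(k:ℝ)*K*(k:ℝ)) / (p * ε^2)) + 1, ?_⟩
  intro V _ _ H hn hHk hdense X hX
  set n : ℕ := Fintype.card V with hndef
  set n' : ℝ := (n : ℝ) with hn'def
  have hn'1 : (1:ℝ) ≤ n' := by
    have h : 1 ≤ n := le_trans (by omega) hn
    rw [hn'def]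
    exact_mod_cast h
  have hn'pos : (0:ℝ) < n' := by linarith
  have hnR2 : 2*(k:ℝ)*K*(k:ℝ) < p * (ε^2 * n') := by
    have h1 : ((Nat.ceil ((2*(k:ℝ)*K*(k:ℝ)) / (p * ε^2)) : ℕ) : ℝ) + 1 ≤ n' := by
      have h : (Nat.ceil ((2*(k:ℝ)*K*(k:ℝ)) / (p * ε^2)) + 1 : ℕ) ≤ n := hn
      rw [hn'def]
      exact_mod_cast h
    have h2 : (2*(k:ℝ)*K*(k:ℝ)) / (p * ε^2) < n' := by
      have := Nat.le_ceil ((2*(k:ℝ)*K*(k:ℝ)) / (p * ε^2))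
      linarith
    have h3 : (0:ℝ) < p * ε^2 := by positivity
    calc 2*(k:ℝ)*K*(k:ℝ) = ((2*(k:ℝ)*K*(k:ℝ)) / (p * ε^2)) * (p * ε^2) := by
          field_simp
    _ < n' * (p * ε^2) := by exact mul_lt_mul_of_pos_right h2 h3
    _ = p * (ε^2 * n') := by ring
  have he1 : ε * (2*(k:ℝ)*K) < p := by
    have hpos : (0:ℝ) < 2*(k:ℝ)*K := by positivity
    exact (lt_div_iff₀ hpos).1 hεu
  set N : ℕ := Nat.ceil (ε^2 * n') with hNdef
  have hNε : ε^2 * n' ≤ (N:ℝ) := Nat.le_ceil _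
  have hNpos : (0:ℝ) < (N:ℝ) := lt_of_lt_of_le (by positivity) hNε
  have hNX : N ≤ X.card := by
    rw [hNdef]
    exact Nat.ceil_le.2 hX
  obtain ⟨X', hX'sub, hX'card⟩ := Finset.exists_subset_card_eq (s := X) (n := N) hNX
  set M : ℕ := Nat.ceil (ε^3 * n') with hMdef
  have hMge : ε^3 * n' ≤ (M:ℝ) := Nat.le_ceil _
  have hMle : (M:ℝ) < ε^3 * n' + 1 := Nat.ceil_lt_add_one (by positivity)
  set Cb : ℕ := N^(k-2) with hCbdef
  set D : ℕ := M * (k-1) * Cb with hDdef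
  -- core numeric inequality
  have hkR1 : ((k-1 : ℕ) : ℝ) = (k:ℝ) - 1 := by
    have : (1:ℕ) ≤ k := by omega
    push_cast [Nat.cast_sub this]
    ring
  have hstep : K * ((k:ℝ)-1) * (M:ℝ) < (p/2) * (N:ℝ) := by
    have hq1 : K * ε ≤ p / (2*(k:ℝ)) := by
      rw [le_div_iff₀ (by positivity)]
      calc K * ε * (2*(k:ℝ)) = ε * (2*(k:ℝ)*K) := by ring
      _ ≤ p := he1.le
    have h1 : K*((k:ℝ)-1)*(ε^3*n') ≤ (p/2)*(ε^2*n')*(((k:ℝ)-1)/(k:ℝ)) := by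
      have heq : K*((k:ℝ)-1)*(ε^3*n') = (K*ε) * (((k:ℝ)-1)*(ε^2*n')) := by ring
      have heq2 : (p/(2*(k:ℝ))) * (((k:ℝ)-1)*(ε^2*n')) = (p/2)*(ε^2*n')*(((k:ℝ)-1)/(k:ℝ)) := by
        field_simp
      rw [heq, ← heq2]
      apply mul_le_mul_of_nonneg_right hq1
      apply mul_nonneg (by linarith) (by positivity)
    have h2 : K*((k:ℝ)-1) < (p/2)*(ε^2*n')*(1/(k:ℝ)) := by
      have heq : (p/2)*(ε^2*n')*(1/(k:ℝ)) = (p*(ε^2*n'))/(2*(k:ℝ)) := by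
        field_simp
      rw [heq, lt_div_iff₀ (by positivity)]
      have : K*((k:ℝ)-1)*(2*(k:ℝ)) < 2*(k:ℝ)*K*(k:ℝ) := by
        nlinarith [hKpos, hkpos]
      linarith
    have hpos3 : (0:ℝ) < K * ((k:ℝ)-1) := by nlinarith
    calc K * ((k:ℝ)-1) * (M:ℝ) < K * ((k:ℝ)-1) * (ε^3*n' + 1) :=
          mul_lt_mul_of_pos_left hMle hpos3
    _ = K*((k:ℝ)-1)*(ε^3*n') + K*((k:ℝ)-1) := by ring
    _ ≤ (p/2)*(ε^2*n')*(((k:ℝ)-1)/(k:ℝ)) + (p/2)*(ε^2*n')*(1/(k:ℝ)) := by linarith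
    _ = (p/2)*(ε^2*n') := by
          field_simp
          ring
    _ ≤ (p/2) * (N:ℝ) := mul_le_mul_of_nonneg_left hNε (by positivity)
  -- edge count lower bound
  have hprod : (∏ _i : Fin k, ((X'.card):ℝ)) = (N:ℝ)^k := by
    rw [Finset.prod_const, hX'card, Finset.card_univ, Fintype.card_fin]
  have hmu : (p/2) * ε^(2*k) * (n')^k ≤ (p/2) * (N:ℝ)^k := by
    have heq : ε^(2*k) * (n')^k = (ε^2 * n')^k := by
      rw [mul_pow, pow_mul]
    rw [mul_assoc, heq]
    apply mul_le_mul_of_nonneg_left _ (by positivity)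
    exact pow_le_pow_left₀ (by positivity) hNε k
  have htc := tupleCount_le k hk H hHk X'
  have hdd := hdense (fun _ => X')
  rw [hprod] at hdd
  set Ec : ℕ := (H.filter (fun e => e ⊆ X')).card with hEcdef
  have hEc : (p/2) * (N:ℝ)^k ≤ K * (Ec:ℝ) := by
    have h1 : p * (N:ℝ)^k - (p/2) * ε^(2*k) * (n')^k ≤ (tupleCount H (fun _ : Fin k => X') : ℝ) := by
      calc p * (N:ℝ)^k - (p/2) * ε^(2*k) * (n')^k
          = p * (N:ℝ)^k - (p/2) * ε^(2*k) * ((Fintype.card V : ℝ))^k := by rw [← hn'def]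
      _ ≤ _ := by
            have := hdd
            linarith [hdd]
    have h2 : ((tupleCount H (fun _ : Fin k => X') : ℕ) : ℝ) ≤ K * (Ec:ℝ) := by
      rw [hKdef, hEcdef]
      exact_mod_cast htc
    nlinarith [pow_pos hNpos k]
  -- ℕ inequality for cleaning
  have hND : ((N * D : ℕ) : ℝ) * K < (p/2) * (N:ℝ)^k := by
    have hpowpos : (0:ℝ) < (N:ℝ)^(k-1) := pow_pos hNpos _
    have hcast : ((N * D : ℕ) : ℝ) = (N:ℝ) * ((M:ℝ) * ((k:ℝ)-1) * ((N:ℝ))^(k-2)) := by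
      push_cast [hDdef, hCbdef, hkR1]
      ring
    have hpow1 : (N:ℝ)^(k-2)*(N:ℝ) = (N:ℝ)^(k-1) := by
      rw [← pow_succ]
      congr 1
      omega
    have hpow2 : (N:ℝ)^k = (N:ℝ)^(k-1)*(N:ℝ) := by
      rw [← pow_succ]
      congr 1
      omega
    calc ((N * D : ℕ) : ℝ) * K = (K * ((k:ℝ)-1) * (M:ℝ)) * ((N:ℝ)^(k-2)*(N:ℝ)) := by
          rw [hcast]; ring
    _ = (K * ((k:ℝ)-1) * (M:ℝ)) * (N:ℝ)^(k-1) := by rw [hpow1]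
    _ < ((p/2) * (N:ℝ)) * (N:ℝ)^(k-1) := mul_lt_mul_of_pos_right hstep hpowpos
    _ = (p/2) * (N:ℝ)^k := by rw [hpow2]; ring
  have hNDlt : N * D < Ec := by
    have h1 : ((N*D:ℕ):ℝ) * K < K * (Ec:ℝ) := lt_of_lt_of_le hND hEc
    have h2 : ((N*D:ℕ):ℝ) < (Ec:ℝ) := by
      have := lt_of_mul_lt_mul_right (by linarith [h1] : ((N*D:ℕ):ℝ) * K < (Ec:ℝ) * K) hKpos.le
      exact this
    exact_mod_cast h2
  -- cleaning
  have hNDlt' : X'.card * D < (H.filter (fun e => e ⊆ X')).card := by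
    rw [hX'card]
    exact hNDlt
  obtain ⟨T, hTX', hTne, hTdeg⟩ := exists_mindeg H D X' hNDlt'
  have hCbT : ∀ x y : V, x ≠ y → (H.filter (fun e => e ⊆ T ∧ x ∈ e ∧ y ∈ e)).card ≤ Cb := by
    intro x y hxy
    refine (pair_bound k hk H hHk T x y hxy).trans ?_
    rw [hCbdef]
    apply Nat.pow_le_pow_left
    calc T.card ≤ X'.card := Finset.card_le_card hTX'
    _ = N := hX'card
  obtain ⟨W, u, v, hWT, hpath⟩ := greedy_path k hk H hHk T M Cb hCbT
    (fun v hv => hTdeg v hv) hTne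
  exact ⟨W, u, v, M, hWT.trans (hTX'.trans hX'sub), hpath, hMge⟩
end
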